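/- arXiv:1907.00432 — 2 statements merged into one kernel-verified Lean document; each statement's English description precedes it below -/
import Mathlib

section
/- The undirected graph on the set H(ω₁) of hereditarily countable sets, with an edge between x and y iff x ∈ y or y ∈ x, is (ω₁, 𝔠)-saturated: for all disjoint vertex sets A, B with |A| ≤ ω and |B| < 𝔠, there is a vertex v ∉ A ∪ B adjacent to every element of A and to no element of B. Consequently |H(ω₁)| = 𝔠. -/
open ZFSet Cardinal

theorem ZFSet.mem_toSet (a u : ZFSet) : a ∈ u.toSet ↔ a ∈ u := Iff.rfl

theorem ZFSet.toSet_empty : (∅ : ZFSet).toSet = ∅ := by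
  ext y; simp [ZFSet.mem_toSet]

theorem ZFSet.toSet_insert (x y : ZFSet) : (insert x y).toSet = insert x y.toSet := by
  ext z; simp [ZFSet.mem_toSet]

/-- A ZFC set is hereditarily countable. -/
def HC (x : ZFSet) : Prop :=
  ZFSet.Hereditarily (fun y => y.toSet.Countable) x

/-- The graph on `H(ω₁)`: an edge between `x` and `y` iff `x ∈ y` or `y ∈ x`. -/
def HGraph : SimpleGraph {x : ZFSet // HC x} :=
  SimpleGraph.fromRel (fun x y => x.1 ∈ y.1)


noncomputable def natZF : ℕ → ZFSet
  | 0 => ∅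
  | n+1 => insert (natZF n) (natZF n)

theorem rank_natZF (n : ℕ) : (natZF n).rank = n := by
  induction n with
  | zero => simp [natZF, ZFSet.rank_empty]
  | succ n ih =>
    rw [natZF, ZFSet.rank_insert, ih, Order.succ_eq_add_one, Nat.cast_succ,
      max_eq_left (le_self_add)]

theorem natZF_inj : Function.Injective natZF := fun m n h => by
  have := congrArg ZFSet.rank h
  rw [rank_natZF, rank_natZF] at this
  exact_mod_cast this

theorem HC_natZF (n : ℕ) : ZFSet.Hereditarily (fun y => y.toSet.Countable) (natZF n) := by
  induction n with
  | zero =>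
    rw [ZFSet.hereditarily_iff]
    exact ⟨by simp [natZF, ZFSet.toSet_empty], fun y hy => by simp [natZF] at hy⟩
  | succ n ih =>
    rw [ZFSet.hereditarily_iff]
    refine ⟨?_, fun y hy => ?_⟩
    · show (insert (natZF n) (natZF n)).toSet.Countable
      rw [ZFSet.toSet_insert]
      exact (ih.self).insert _
    · rcases ZFSet.mem_insert_iff.mp hy with rfl | h
      · exact ih
      · exact ih.mem h

theorem exists_zfset {S : Set ZFSet} (h : S.Countable) : ∃ x : ZFSet, x.toSet = S := by
  rcases S.eq_empty_or_nonempty with rfl | hne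
  · exact ⟨∅, ZFSet.toSet_empty⟩
  · obtain ⟨f, rfl⟩ := h.exists_eq_range hne
    refine ⟨ZFSet.range f, ?_⟩
    ext y
    simp [ZFSet.mem_toSet]



noncomputable def ofC (S : Set ZFSet) (h : S.Countable) : ZFSet := (exists_zfset h).choose

theorem toSet_ofC (S : Set ZFSet) (h : S.Countable) : (ofC S h).toSet = S :=
  (exists_zfset h).choose_spec

theorem mem_ofC {S : Set ZFSet} {h : S.Countable} {y : ZFSet} : y ∈ ofC S h ↔ y ∈ S := by
  rw [← ZFSet.mem_toSet, toSet_ofC]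

theorem HC_of (S : Set ZFSet) (h : S.Countable) (hS : ∀ y ∈ S, HC y) : HC (ofC S h) := by
  rw [HC, ZFSet.hereditarily_iff]
  exact ⟨by rw [toSet_ofC]; exact h, fun y hy => hS y (mem_ofC.mp hy)⟩

noncomputable def natSet (s : Set ℕ) : ZFSet :=
  ofC (natZF '' s) ((s.to_countable).image _)

theorem mem_natSet {s : Set ℕ} {y : ZFSet} : y ∈ natSet s ↔ y ∈ natZF '' s := mem_ofC

theorem HC_natSet (s : Set ℕ) : HC (natSet s) :=
  HC_of _ _ (fun y hy => by obtain ⟨n, -, rfl⟩ := hy; exact HC_natZF n)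

theorem natSet_inj : Function.Injective natSet := fun s t h => by
  have him : natZF '' s = natZF '' t := by
    have h1 := toSet_ofC (natZF '' s) ((s.to_countable).image _)
    have h2 := toSet_ofC (natZF '' t) ((t.to_countable).image _)
    rw [← h1, ← h2]; exact congrArg ZFSet.toSet h
  exact (Set.image_injective.mpr natZF_inj) him

theorem omega1_isLimit : Order.IsSuccLimit ((Cardinal.aleph 1).ord) :=
  Cardinal.isSuccLimit_ord (Cardinal.aleph0_le_aleph 1)

theorem rank_lt_omega1 {x : ZFSet} (hx : HC x) : x.rank < (Cardinal.aleph 1).ord := by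
  induction x using ZFSet.inductionOn with
  | _ x ih =>
    rcases x.toSet.eq_empty_or_nonempty with he | hne
    · have hx0 : x = ∅ := by ext y; rw [← ZFSet.mem_toSet, he]; simp
      rw [hx0, ZFSet.rank_empty]
      exact omega1_isLimit.pos
    · obtain ⟨g, hg⟩ := (hx.self).exists_eq_range hne
      have hmem : ∀ n, g n ∈ x := by
        intro n; rw [← ZFSet.mem_toSet, hg]; exact ⟨n, rfl⟩
      have hsup : (⨆ n : ℕ, Order.succ ((g n).rank)) < (Cardinal.aleph 1).ord := by
        apply Ordinal.iSup_lt_ord_lift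
        · rw [Cardinal.isRegular_aleph_one.cof_eq, Cardinal.mk_nat, Cardinal.lift_aleph0]
          exact Cardinal.aleph0_lt_aleph_one
        · intro n
          exact omega1_isLimit.succ_lt (ih _ (hmem n) (hx.mem (hmem n)))
      refine lt_of_le_of_lt ?_ hsup
      rw [ZFSet.rank_le_iff]
      intro y hy
      have : y ∈ Set.range g := by rw [← hg, ZFSet.mem_toSet]; exact hy
      obtain ⟨n, rfl⟩ := this
      calc (g n).rank < Order.succ ((g n).rank) := Order.lt_succ _
        _ ≤ _ := le_ciSup (Ordinal.bddAbove_range _) n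


theorem mk_countable_subsets_le {X : Type u} (h : #X ≤ Cardinal.continuum.{u}) :
    #{s : Set X // s.Countable} ≤ Cardinal.continuum.{u} := by
  have key : ∀ s : {s : Set X // s.Countable}, ∃ f : ℕ → Option X,
      ∀ x, x ∈ s.1 ↔ some x ∈ Set.range f := by
    rintro ⟨s, hs⟩
    rcases s.eq_empty_or_nonempty with rfl | hne
    · exact ⟨fun _ => none, fun x => by simp⟩
    · obtain ⟨g, rfl⟩ := hs.exists_eq_range hne
      exact ⟨fun n => some (g n), fun x => by
        constructor
        · rintro ⟨n, rfl⟩; exact ⟨n, rfl⟩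
        · rintro ⟨n, hn⟩; exact ⟨n, Option.some_injective _ hn⟩⟩
  choose F hF using key
  have hinj : Function.Injective F := by
    intro s t hst
    apply Subtype.ext
    ext x
    rw [hF s x, hF t x, hst]
  calc #{s : Set X // s.Countable} ≤ #(ℕ → Option X) := Cardinal.mk_le_of_injective hinj
    _ = (#X + 1) ^ (ℵ₀ : Cardinal.{u}) := by
        simp [Cardinal.mk_arrow, Cardinal.mk_option, Cardinal.mk_nat]
    _ ≤ Cardinal.continuum ^ (ℵ₀ : Cardinal.{u}) := by
        apply Cardinal.power_le_power_right
        calc #X + 1 ≤ 𝔠 + 𝔠 := add_le_add h (le_trans (by norm_num) Cardinal.aleph0_le_continuum)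
          _ = 𝔠 := Cardinal.add_eq_self Cardinal.aleph0_le_continuum
    _ = 𝔠 := Cardinal.continuum_power_aleph0

theorem mk_T_le : ∀ α : Ordinal, α ≤ (Cardinal.aleph 1).ord →
    #{x : ZFSet // HC x ∧ x.rank ≤ α} ≤ Cardinal.continuum := by
  intro α
  induction α using Ordinal.induction with
  | _ α IH =>
    intro hα
    have hS : #{x : ZFSet // HC x ∧ x.rank < α} ≤ Cardinal.continuum := by
      have hΨ : Function.Injective
          (fun x : {x : ZFSet // HC x ∧ x.rank < α} =>
            (⟨⟨x.1.rank, x.2.2⟩, ⟨x.1, x.2.1, le_rfl⟩⟩ :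
              Σ β : Set.Iio α, {y : ZFSet // HC y ∧ y.rank ≤ β.1})) := by
        intro x y h
        exact Subtype.ext (congrArg (fun p :
          (Σ β : Set.Iio α, {y : ZFSet // HC y ∧ y.rank ≤ β.1}) => p.2.1) h)
      calc #{x : ZFSet // HC x ∧ x.rank < α}
          ≤ #(Σ β : Set.Iio α, {y : ZFSet // HC y ∧ y.rank ≤ β.1}) :=
            Cardinal.mk_le_of_injective hΨ
        _ = Cardinal.sum (fun β : Set.Iio α => #{y : ZFSet // HC y ∧ y.rank ≤ β.1}) :=
            Cardinal.mk_sigma _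
        _ ≤ Cardinal.sum (fun _ : Set.Iio α => Cardinal.continuum) :=
            Cardinal.sum_le_sum _ _ (fun β => IH β.1 β.2 (le_trans (le_of_lt β.2) hα))
        _ = #(Set.Iio α) * Cardinal.continuum := Cardinal.sum_const' _ _
        _ ≤ Cardinal.continuum * Cardinal.continuum := by
            apply mul_le_mul_left
            rw [Ordinal.mk_Iio_ordinal]
            calc Cardinal.lift.{_+1} α.card ≤ Cardinal.lift.{_+1} (Cardinal.aleph 1) := by
                  apply Cardinal.lift_le.mpr
                  have := Ordinal.card_le_card hα
                  rwa [Cardinal.card_ord] at this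
              _ ≤ Cardinal.continuum := by
                  rw [Cardinal.lift_aleph]
                  simpa using Cardinal.aleph_one_le_continuum
        _ = Cardinal.continuum := Cardinal.mul_eq_self Cardinal.aleph0_le_continuum
    -- now T α embeds into countable subsets of S α
    have hΦ : Function.Injective
        (fun x : {x : ZFSet // HC x ∧ x.rank ≤ α} =>
          (⟨{y : {y : ZFSet // HC y ∧ y.rank < α} | y.1 ∈ x.1},
            ((x.2.1.self).preimage Subtype.val_injective : _)⟩ :
            {s : Set {y : ZFSet // HC y ∧ y.rank < α} // s.Countable})) := by
      intro x y h
      have hsets : {w : {y : ZFSet // HC y ∧ y.rank < α} | w.1 ∈ x.1} =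
          {w : {y : ZFSet // HC y ∧ y.rank < α} | w.1 ∈ y.1} := congrArg Subtype.val h
      apply Subtype.ext
      ext z
      constructor
      · intro hz
        have hzS : HC z ∧ z.rank < α :=
          ⟨x.2.1.mem hz, lt_of_lt_of_le (ZFSet.rank_lt_of_mem hz) x.2.2⟩
        have h1 : (⟨z, hzS⟩ : {y : ZFSet // HC y ∧ y.rank < α}) ∈
            {w : {y : ZFSet // HC y ∧ y.rank < α} | w.1 ∈ x.1} := hz
        rw [hsets] at h1
        exact h1
      · intro hz
        have hzS : HC z ∧ z.rank < α :=
          ⟨y.2.1.mem hz, lt_of_lt_of_le (ZFSet.rank_lt_of_mem hz) y.2.2⟩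
        have h1 : (⟨z, hzS⟩ : {y : ZFSet // HC y ∧ y.rank < α}) ∈
            {w : {y : ZFSet // HC y ∧ y.rank < α} | w.1 ∈ y.1} := hz
        rw [← hsets] at h1
        exact h1
    calc #{x : ZFSet // HC x ∧ x.rank ≤ α}
        ≤ #{s : Set {y : ZFSet // HC y ∧ y.rank < α} // s.Countable} :=
          Cardinal.mk_le_of_injective hΦ
      _ ≤ Cardinal.continuum := mk_countable_subsets_le hS



theorem saturation (A B : Set {x : ZFSet // HC x}) (hA : A.Countable)
    (hB : Cardinal.mk B < Cardinal.continuum) (hd : Disjoint A B) :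
    ∃ v, v ∉ A ∪ B ∧ (∀ a ∈ A, HGraph.Adj v a) ∧ (∀ b ∈ B, ¬ HGraph.Adj v b) := by
  classical
  set A0 : Set ZFSet := Subtype.val '' A with hA0
  set B0 : Set ZFSet := Subtype.val '' B with hB0
  have hA0c : A0.Countable := hA.image _
  have hcand : ∀ s : Set ℕ, (A0 ∪ {natSet s}).Countable :=
    fun s => hA0c.union (Set.countable_singleton _)
  set v : ULift.{_, 0} (Set ℕ) → ZFSet := fun s => ofC (A0 ∪ {natSet s.down}) (hcand s.down)
    with hv
  have hvmem : ∀ (s) (y : ZFSet), y ∈ v s ↔ y ∈ A0 ∨ y = natSet s.down := by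
    intro s y
    rw [hv]
    simp only [mem_ofC, Set.mem_union, Set.mem_singleton_iff]
  haveI hA0ct : Countable A0 := hA0c.to_subtype
  set F : Set ZFSet := (⋃ b : B, (b.1.1.toSet)) ∪ (A0 ∪ B0) with hF
  have hFlt : #F < Cardinal.continuum := by
    have h1 : #(⋃ b : B, (b.1.1.toSet)) < Cardinal.continuum := by
      calc #(⋃ b : B, (b.1.1.toSet)) ≤ Cardinal.sum (fun b : B => #(b.1.1.toSet)) :=
            Cardinal.mk_iUnion_le_sum_mk
        _ ≤ Cardinal.sum (fun _ : B => ℵ₀) := by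
            refine Cardinal.sum_le_sum _ _ (fun b => ?_)
            haveI := (b.1.2.self).to_subtype
            exact Cardinal.mk_le_aleph0
        _ = #B * ℵ₀ := Cardinal.sum_const' _ _
        _ < Cardinal.continuum :=
            Cardinal.mul_lt_of_lt Cardinal.aleph0_le_continuum hB Cardinal.aleph0_lt_continuum
    have h2 : #A0 < Cardinal.continuum :=
      lt_of_le_of_lt Cardinal.mk_le_aleph0 Cardinal.aleph0_lt_continuum
    have h3 : #B0 < Cardinal.continuum := lt_of_le_of_lt Cardinal.mk_image_le hB
    calc #F ≤ #(⋃ b : B, (b.1.1.toSet)) + #((A0 ∪ B0 : Set ZFSet)) := Cardinal.mk_union_le _ _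
      _ ≤ #(⋃ b : B, (b.1.1.toSet)) + (#A0 + #B0) :=
          add_le_add_right (Cardinal.mk_union_le _ _) _
      _ < Cardinal.continuum := by
          apply Cardinal.add_lt_of_lt Cardinal.aleph0_le_continuum h1
          exact Cardinal.add_lt_of_lt Cardinal.aleph0_le_continuum h2 h3
  set Bad1 : Set (ULift.{_, 0} (Set ℕ)) := {s | natSet s.down ∈ A0 ∪ B0} with hBad1
  set Bad2 : Set (ULift.{_, 0} (Set ℕ)) := {s | s ∉ Bad1 ∧ v s ∈ F} with hBad2
  have hBad1lt : #Bad1 < Cardinal.continuum := by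
    have : Function.Injective (fun s : Bad1 => (⟨natSet s.1.down, s.2⟩ : (A0 ∪ B0 : Set ZFSet))) := by
      intro s t h
      have := natSet_inj (congrArg (fun z : (A0 ∪ B0 : Set ZFSet) => z.1) h)
      exact Subtype.ext (ULift.ext _ _ this)
    calc #Bad1 ≤ #(A0 ∪ B0 : Set ZFSet) := Cardinal.mk_le_of_injective this
      _ ≤ #A0 + #B0 := Cardinal.mk_union_le _ _
      _ < Cardinal.continuum := by
          apply Cardinal.add_lt_of_lt Cardinal.aleph0_le_continuum
          · exact lt_of_le_of_lt Cardinal.mk_le_aleph0 Cardinal.aleph0_lt_continuum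
          · exact lt_of_le_of_lt Cardinal.mk_image_le hB
  have hBad2lt : #Bad2 < Cardinal.continuum := by
    have : Function.Injective (fun s : Bad2 => (⟨v s.1, s.2.2⟩ : F)) := by
      intro s t h
      have hvv : v s.1 = v t.1 := congrArg Subtype.val h
      have hs1 : natSet s.1.down ∉ A0 := fun hmem => s.2.1 (Set.mem_union_left _ hmem)
      have ht1 : natSet t.1.down ∉ A0 := fun hmem => t.2.1 (Set.mem_union_left _ hmem)
      have : natSet s.1.down ∈ v t.1 := by
        rw [← hvv, hvmem]; right; rfl
      rw [hvmem] at this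
      rcases this with h' | h'
      · exact absurd h' hs1
      · exact Subtype.ext (ULift.ext _ _ (natSet_inj h'))
    calc #Bad2 ≤ #F := Cardinal.mk_le_of_injective this
      _ < Cardinal.continuum := hFlt
  have hne : (Bad1 ∪ Bad2) ≠ Set.univ := by
    intro hcon
    have h1 : #(Bad1 ∪ Bad2 : Set (ULift.{_, 0} (Set ℕ))) < Cardinal.continuum := by
      calc #(Bad1 ∪ Bad2 : Set (ULift.{_, 0} (Set ℕ))) ≤ #Bad1 + #Bad2 := Cardinal.mk_union_le _ _
        _ < Cardinal.continuum :=
            Cardinal.add_lt_of_lt Cardinal.aleph0_le_continuum hBad1lt hBad2lt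
    rw [hcon, Cardinal.mk_univ, Cardinal.mk_uLift, Cardinal.mk_set, Cardinal.mk_nat,
      Cardinal.two_power_aleph0, Cardinal.lift_continuum] at h1
    exact lt_irrefl _ h1
  obtain ⟨s, hs⟩ := Set.ne_univ_iff_exists_notMem _ |>.mp hne
  rw [Set.mem_union, not_or] at hs
  obtain ⟨hs1, hs2⟩ := hs
  have hsF : v s ∉ F := fun h => hs2 ⟨hs1, h⟩
  -- the witness
  have hwHC : HC (v s) := by
    apply HC_of
    rintro y (hy | hy)
    · obtain ⟨a, -, rfl⟩ := hy
      exact a.2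
    · rw [hy]; exact HC_natSet _
  refine ⟨⟨v s, hwHC⟩, ?_, ?_, ?_⟩
  · rintro (h | h)
    · exact hsF (Set.mem_union_right _ (Set.mem_union_left _ ⟨_, h, rfl⟩))
    · exact hsF (Set.mem_union_right _ (Set.mem_union_right _ ⟨_, h, rfl⟩))
  · intro a ha
    rw [HGraph, SimpleGraph.fromRel_adj]
    constructor
    · intro hcon
      apply hsF
      have hval : v s = a.1 := congrArg Subtype.val hcon
      rw [hval]
      exact Set.mem_union_right _ (Set.mem_union_left _ ⟨a, ha, rfl⟩)
    · right
      rw [hvmem]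
      exact Or.inl ⟨a, ha, rfl⟩
  · intro b hb hadj
    rw [HGraph, SimpleGraph.fromRel_adj] at hadj
    rcases hadj.2 with h | h
    · exact hsF (Set.mem_union_left _ (Set.mem_iUnion.mpr ⟨⟨b, hb⟩, h⟩))
    · rw [hvmem] at h
      rcases h with h | h
      · obtain ⟨a, ha, hab⟩ := h
        have : a = b := Subtype.ext hab
        rw [this] at ha
        exact Set.disjoint_left.mp hd ha hb
      · exact hs1 (Set.mem_union_right _ ⟨b, hb, h⟩)

theorem stmt17 :
    (∀ A B : Set {x : ZFSet // HC x}, A.Countable →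
      Cardinal.mk B < Cardinal.continuum → Disjoint A B →
      ∃ v, v ∉ A ∪ B ∧ (∀ a ∈ A, HGraph.Adj v a) ∧ (∀ b ∈ B, ¬ HGraph.Adj v b)) ∧
    Cardinal.mk {x : ZFSet // HC x} = Cardinal.continuum := by
  refine ⟨saturation, le_antisymm ?_ ?_⟩
  · have hinj : Function.Injective
        (fun x : {x : ZFSet // HC x} =>
          (⟨x.1, x.2, (rank_lt_omega1 x.2).le⟩ :
            {x : ZFSet // HC x ∧ x.rank ≤ (Cardinal.aleph 1).ord})) :=
      fun x y h => Subtype.ext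
        (congrArg (fun z : {x : ZFSet // HC x ∧ x.rank ≤ (Cardinal.aleph 1).ord} => z.1) h)
    exact le_trans (Cardinal.mk_le_of_injective hinj) (mk_T_le _ le_rfl)
  · have hinj : Function.Injective
        (fun s : ULift.{_, 0} (Set ℕ) => (⟨natSet s.down, HC_natSet s.down⟩ : {x : ZFSet // HC x})) :=
      fun s t h => ULift.ext _ _ (natSet_inj
        (congrArg (fun z : {x : ZFSet // HC x} => z.1) h))
    have hmk : #(ULift.{_, 0} (Set ℕ)) = Cardinal.continuum := by
      rw [Cardinal.mk_uLift, Cardinal.mk_set, Cardinal.mk_nat, Cardinal.two_power_aleph0,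
        Cardinal.lift_continuum]
    rw [← hmk]
    exact Cardinal.mk_le_of_injective hinj
end

section
/- There is no graph S of cardinality ω₂ such that both S and its complement graph have colouring number at most ω₁. Consequently, if 𝔠 > ω₁ then there is no prime (ω₁,ω₁)-saturated graph. -/
/-- `G` has colouring number at most `κ`: there is a well-ordering of the vertices
in which every vertex has fewer than `κ` neighbours below it. -/
def ColLE {V : Type*} (G : SimpleGraph V) (κ : Cardinal) : Prop :=
  ∃ r : V → V → Prop, IsWellOrder V r ∧
    ∀ g : V, Cardinal.mk {h : V | r h g ∧ G.Adj g h} < κ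

/-- `(ω₁,ω₁)`-saturation of a graph. -/
def Sat11 {V : Type*} (G : SimpleGraph V) : Prop :=
  ∀ A B : Set V, A.Countable → B.Countable → Disjoint A B →
    ∃ v : V, (∀ a ∈ A, G.Adj v a) ∧ (∀ b ∈ B, ¬ G.Adj v b)

open Cardinal Ordinal

/-! ### Auxiliary: a concrete `(ω₁,ω₁)`-saturated graph with colouring number `≤ ω₁`.

We use a type of "hereditarily countable set" codes: each code is either empty or
an `ℕ`-indexed family of codes, thought of as a countable set.  The graph `HG` is
symmetrised membership. -/

inductive HC_s18 : Type where
  | empty : HC_s18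
  | node : (ℕ → HC_s18) → HC_s18

def HC_s18.Mem (x y : HC_s18) : Prop := match y with | .empty => False | .node f => ∃ n, f n = x

theorem HC_s18.mem_node {x : HC_s18} {f : ℕ → HC_s18} : HC_s18.Mem x (.node f) ↔ x ∈ Set.range f :=
  Iff.rfl

theorem HC_s18.mem_wf : WellFounded HC_s18.Mem := by
  constructor
  intro x
  induction x with
  | empty => exact ⟨_, fun y h => h.elim⟩
  | node f ih =>
    constructor
    rintro y ⟨n, rfl⟩
    exact ih n

instance : IsWellFounded HC_s18 HC_s18.Mem := ⟨HC_s18.mem_wf⟩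

noncomputable def HC_s18.rank (x : HC_s18) : Ordinal := IsWellFounded.rank HC_s18.Mem x

theorem HC_s18.rank_lt_of_mem {x y : HC_s18} (h : HC_s18.Mem x y) : x.rank < y.rank :=
  IsWellFounded.rank_lt_of_rel h

theorem HC_s18.countable_mem (y : HC_s18) : {x | HC_s18.Mem x y}.Countable := by
  cases y with
  | empty => simp [HC_s18.Mem]
  | node f =>
    have : {x | HC_s18.Mem x (.node f)} ⊆ Set.range f := by
      rintro x ⟨n, rfl⟩; exact ⟨n, rfl⟩
    exact (Set.countable_range f).mono this

/-- The graph on hereditarily countable "sets" given by symmetrised membership. -/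
def HG : SimpleGraph HC_s18 where
  Adj x y := x ≠ y ∧ (HC_s18.Mem x y ∨ HC_s18.Mem y x)
  symm := ⟨by rintro x y ⟨h1, h2⟩; exact ⟨h1.symm, h2.symm⟩⟩
  loopless := ⟨by rintro x ⟨h1, -⟩; exact h1 rfl⟩

theorem HG_key (A B : Set HC_s18) (hA : A.Countable) (hB : B.Countable) (hd : Disjoint A B) :
    ∃ v : HC_s18, (∀ a ∈ A, HG.Adj v a) ∧ (∀ b ∈ B, ¬ HG.Adj v b ∧ v ≠ b) := by
  obtain ⟨e, he⟩ := (hA.union (hB.union (Set.countable_singleton HC_s18.empty))).exists_eq_range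
    (by exact ⟨_, Or.inr (Or.inr rfl)⟩)
  set c : HC_s18 := HC_s18.node e with hc
  obtain ⟨e', he'⟩ := (hA.union (Set.countable_singleton c)).exists_eq_range
    (by exact ⟨_, Or.inr rfl⟩)
  set v : HC_s18 := HC_s18.node e' with hv
  have hmemv : ∀ x, HC_s18.Mem x v ↔ x ∈ A ∪ {c} := by
    intro x; rw [hv, HC_s18.mem_node, ← he']
  have hmemc : ∀ x ∈ A ∪ B, HC_s18.Mem x c := by
    intro x hx; rw [hc, HC_s18.mem_node, ← he]
    rcases hx with h | h
    · exact Or.inl h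
    · exact Or.inr (Or.inl h)
  have hcv : c.rank < v.rank := HC_s18.rank_lt_of_mem ((hmemv c).2 (Or.inr rfl))
  have hrk : ∀ x ∈ A ∪ B, x.rank < v.rank := fun x hx =>
    (HC_s18.rank_lt_of_mem (hmemc x hx)).trans hcv
  have hne : ∀ x ∈ A ∪ B, v ≠ x := fun x hx h => absurd (hrk x hx) (by rw [← h]; exact lt_irrefl _)
  refine ⟨v, fun a ha => ⟨hne a (Or.inl ha), Or.inr ((hmemv a).2 (Or.inl ha))⟩, fun b hb => ?_⟩
  refine ⟨?_, hne b (Or.inr hb)⟩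
  rintro ⟨-, hm | hm⟩
  · exact absurd (HC_s18.rank_lt_of_mem hm) (not_lt.2 (hrk b (Or.inr hb)).le)
  · rcases (hmemv b).1 hm with h | h
    · exact (hd.ne_of_mem h hb) rfl
    · rw [h] at hm
      exact absurd (HC_s18.rank_lt_of_mem (hmemc b (Or.inr hb))) (not_lt.2 (le_of_eq (by rw [h])))

theorem sat_HG : Sat11 HG := by
  intro A B hA hB hd
  obtain ⟨v, h1, h2⟩ := HG_key A B hA hB hd
  exact ⟨v, h1, fun b hb => (h2 b hb).1⟩

theorem sat_HGc : Sat11 HGᶜ := by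
  intro A B hA hB hd
  obtain ⟨v, h1, h2⟩ := HG_key B A hB hA hd.symm
  refine ⟨v, fun a ha => ?_, fun b hb => ?_⟩
  · rw [SimpleGraph.compl_adj]
    exact ⟨(h2 a ha).2, (h2 a ha).1⟩
  · rw [SimpleGraph.compl_adj]
    rintro ⟨-, hn⟩
    exact hn (h1 b hb)

theorem countable_lt_aleph_one {α : Type} (s : Set α) (h : s.Countable) :
    Cardinal.mk s < Cardinal.aleph 1 :=
  lt_of_le_of_lt h.le_aleph0 Cardinal.aleph0_lt_aleph_one

theorem col_HG : ColLE HG (Cardinal.aleph 1) := by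
  classical
  letI s : Ordinal × HC_s18 → Ordinal × HC_s18 → Prop := Prod.Lex (· < ·) WellOrderingRel
  haveI : IsWellOrder (Ordinal × HC_s18) s := by
    unfold s; infer_instance
  letI r : HC_s18 → HC_s18 → Prop := fun a b => s (HC_s18.rank a, a) (HC_s18.rank b, b)
  haveI hwo : IsWellOrder HC_s18 r :=
    RelEmbedding.isWellOrder ⟨⟨fun a => (HC_s18.rank a, a), fun a b h => congrArg Prod.snd h⟩, Iff.rfl⟩
  refine ⟨r, hwo, fun g => ?_⟩
  have hsub : {h : HC_s18 | r h g ∧ HG.Adj g h} ⊆ {h | HC_s18.Mem h g} := by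
    rintro h ⟨hr, hgne, hadj⟩
    have hle : HC_s18.rank h ≤ HC_s18.rank g := by
      rcases Prod.lex_iff.1 hr with h1 | ⟨h1, -⟩
      · exact h1.le
      · exact h1.le
    rcases hadj with hm | hm
    · exact absurd (HC_s18.rank_lt_of_mem hm) (not_lt.2 hle)
    · exact hm
  exact countable_lt_aleph_one _ ((HC_s18.countable_mem g).mono hsub)

/-! ### Colouring numbers and embeddings -/

theorem pullback_isWellOrder {α β : Type*} (f : α → β) (hf : Function.Injective f)
    (s : β → β → Prop) [IsWellOrder β s] : IsWellOrder α (fun a b => s (f a) (f b)) :=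
  RelEmbedding.isWellOrder ⟨⟨f, hf⟩, Iff.rfl⟩

theorem colLE_of_embedding {V W : Type} {G : SimpleGraph V} {H : SimpleGraph W}
    (f : G ↪g H) {κ : Cardinal} (h : ColLE H κ) : ColLE G κ := by
  obtain ⟨r, hr, hcard⟩ := h
  haveI := hr
  refine ⟨fun a b => r (f a) (f b), pullback_isWellOrder f f.injective r, fun g => ?_⟩
  refine lt_of_le_of_lt ?_ (hcard (f g))
  have : Function.Injective
      (fun h : {h : V | r (f h) (f g) ∧ G.Adj g h} =>
        (⟨f h.1, h.2.1, f.map_adj_iff.2 h.2.2⟩ : {h' : W | r h' (f g) ∧ H.Adj (f g) h'})) := by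
    intro a b hab
    exact Subtype.ext (f.injective (congrArg Subtype.val hab))
  exact Cardinal.mk_le_of_injective this

/-- Complement of a graph embedding. -/
def Embedding.compl {V W : Type*} {G : SimpleGraph V} {H : SimpleGraph W} (f : G ↪g H) :
    Gᶜ ↪g Hᶜ where
  toFun := f
  inj' := f.injective
  map_rel_iff' := by
    intro a b
    show f a ≠ f b ∧ ¬H.Adj (f a) (f b) ↔ _
    rw [SimpleGraph.compl_adj, f.map_adj_iff, f.injective.ne_iff]

/-! ### The two-well-orders lemma -/


theorem two_wellorders {V : Type} (hV : #V = aleph 2) (r r' : V → V → Prop)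
    (hr : IsWellOrder V r) (hr' : IsWellOrder V r') :
    ∃ (g : V) (K : Set V), aleph 1 ≤ #K ∧ ∀ h ∈ K, r h g ∧ r' h g := by
  classical
  have h21 : (2 : Ordinal) = Order.succ 1 := by
    rw [← Ordinal.add_one_eq_succ, one_add_one_eq_two]
  have halephsucc : aleph 2 = Order.succ (aleph 1) := by rw [h21, aleph_succ]
  have hlt_iff : ∀ c : Cardinal.{0}, c < aleph 2 ↔ c ≤ aleph 1 := by
    intro c; rw [halephsucc, Order.lt_succ_iff]
  have htype : (aleph 2).ord ≤ Ordinal.type r := by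
    rw [Cardinal.ord_le, Ordinal.card_type, hV]
  -- the initial segment of `r` of order type `ω₂`
  set Y : Set V := {g | typein r g < (aleph 2).ord} with hYdef
  have hYmem : ∀ g, g ∈ Y ↔ typein r g < (aleph 2).ord := fun g => Iff.rfl
  have hYcard : aleph 2 ≤ #Y := by
    rw [← Cardinal.card_ord (aleph 2), ← Cardinal.mk_toType]
    haveI : IsWellOrder ((aleph 2 : Cardinal.{0}).ord).ToType (· < ·) := isWellOrder_lt
    have hj : ∀ x : ((aleph 2 : Cardinal.{0}).ord).ToType,
        typein (α := ((aleph 2 : Cardinal.{0}).ord).ToType) (· < ·) x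
        < Ordinal.type r := fun x => lt_of_lt_of_le (typein_lt_self x) htype
    have hjm : ∀ x, enum r ⟨typein (α := ((aleph 2 : Cardinal.{0}).ord).ToType) (· < ·) x, hj x⟩ ∈ Y := by
      intro x
      rw [hYmem, typein_enum]
      exact typein_lt_self x
    refine Cardinal.mk_le_of_injective (f := fun x => (⟨enum r ⟨typein (α := ((aleph 2 : Cardinal.{0}).ord).ToType) (· < ·) x, hj x⟩, hjm x⟩ : Y)) ?_
    intro a b hab
    have := congrArg (fun z : Y => typein r z.1) hab
    simp only [typein_enum] at this
    exact typein_injective _ this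
  -- restrict `r'` to `Y`
  set r'' : Y → Y → Prop := Subrel r' Y with hr''def
  haveI : IsWellOrder Y r'' := by rw [hr''def]; exact Subrel.instIsWellOrderSubtype r' Y
  have htype'' : (aleph 1).ord < Ordinal.type r'' := by
    have h1 : (aleph 1 : Cardinal.{0}).ord < (aleph 2).ord :=
      Cardinal.ord_lt_ord.2 (aleph_lt_aleph.2 one_lt_two)
    have h2 : (aleph 2 : Cardinal.{0}).ord ≤ Ordinal.type r'' := by
      rw [Cardinal.ord_le, Ordinal.card_type]; exact hYcard
    exact lt_of_lt_of_le h1 h2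
  obtain ⟨x₀, hx₀⟩ := typein_surj r'' htype''
  -- the first ℵ₁ elements of Y under r'
  have hBcard : #{y : Y // r'' y x₀} = aleph 1 := by
    rw [← Ordinal.card_typein, hx₀, Cardinal.card_ord]
  -- the sup of their r-positions
  set σ : Ordinal := ⨆ i : {y : Y // r'' y x₀}, typein r i.1.1 with hσdef
  have hσ : σ < (aleph 2).ord := by
    have hcof : ((aleph 2).ord).cof = aleph 2 := by
      rw [h21]; exact (Cardinal.isRegular_aleph_succ 1).cof_eq
    refine Ordinal.iSup_lt_ord ?_ ?_
    · rw [hBcard, hcof]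
      exact aleph_lt_aleph.2 one_lt_two
    · exact fun i => i.1.2
  have hσ1 : σ + 1 < (aleph 2).ord := by
    rw [Ordinal.add_one_eq_succ]
    exact (Cardinal.isSuccLimit_ord (aleph0_le_aleph 2)).succ_lt hσ
  obtain ⟨x₁, hx₁⟩ := typein_surj r (lt_of_lt_of_le hσ1 htype)
  -- find g avoiding both "bad" sets
  have hexists : ∃ g : Y, ¬ r g.1 x₁ ∧ ¬ r'' g x₀ := by
    by_contra hcon
    push_neg at hcon
    have hcover : (Set.univ : Set Y) ⊆ {g : Y | r g.1 x₁} ∪ {g : Y | r'' g x₀} := by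
      intro g _
      by_cases hg : r g.1 x₁
      · exact Or.inl hg
      · exact Or.inr (hcon g hg)
    have hb1 : #{g : Y | r g.1 x₁} ≤ aleph 1 := by
      have him : Subtype.val '' {g : Y | r g.1 x₁} ⊆ {h : V | r h x₁} := by
        rintro h ⟨g, hg, rfl⟩; exact hg
      have : #{g : Y | r g.1 x₁} ≤ #{h : V | r h x₁} := by
        rw [← Cardinal.mk_image_eq (f := (Subtype.val : Y → V)) Subtype.val_injective]
        exact Cardinal.mk_le_mk_of_subset him
      refine le_trans this ?_
      have : #{h : V | r h x₁} = (typein r x₁).card := (Ordinal.card_typein x₁).symm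
      rw [this, hx₁]
      rw [← hlt_iff, ← Cardinal.lt_ord]
      exact hσ1
    have hb2 : #{g : Y | r'' g x₀} ≤ aleph 1 := by
      have : #{g : Y | r'' g x₀} = #{y : Y // r'' y x₀} := rfl
      rw [this, hBcard]
    have : aleph 2 ≤ aleph 1 := by
      calc aleph 2 ≤ #Y := hYcard
        _ = #(Set.univ : Set Y) := (Cardinal.mk_univ).symm
        _ ≤ #({g : Y | r g.1 x₁} ∪ {g : Y | r'' g x₀} : Set Y) :=
            Cardinal.mk_le_mk_of_subset hcover
        _ ≤ #{g : Y | r g.1 x₁} + #{g : Y | r'' g x₀} := Cardinal.mk_union_le _ _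
        _ ≤ aleph 1 + aleph 1 := add_le_add hb1 hb2
        _ = aleph 1 := Cardinal.add_eq_self (aleph0_le_aleph 1)
    exact absurd (lt_of_lt_of_le (aleph_lt_aleph.2 one_lt_two) this) (lt_irrefl _)
  obtain ⟨g, hg1, hg2⟩ := hexists
  refine ⟨g.1, Subtype.val '' {y : Y | r'' y x₀}, ?_, ?_⟩
  · rw [Cardinal.mk_image_eq Subtype.val_injective]
    exact le_of_eq hBcard.symm
  · rintro h ⟨y, hy, rfl⟩
    constructor
    · -- r y.1 g.1
      rw [← typein_lt_typein r]
      have h1 : typein r y.1 ≤ σ := Ordinal.le_iSup (fun i : {y : Y // r'' y x₀} => typein r i.1.1) ⟨y, hy⟩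
      have h2 : typein r x₁ ≤ typein r g.1 := (typein_le_typein r).2 hg1
      refine lt_of_le_of_lt h1 (lt_of_lt_of_le ?_ h2)
      rw [hx₁]
      exact lt_of_lt_of_le (Order.lt_succ σ) (le_of_eq (Ordinal.add_one_eq_succ σ).symm)
    · -- r' y.1 g.1
      have h1 : typein r'' y < typein r'' x₀ := (typein_lt_typein r'').2 hy
      have h2 : typein r'' x₀ ≤ typein r'' g := (typein_le_typein r'').2 hg2
      exact (typein_lt_typein r'').1 (lt_of_lt_of_le h1 h2)

/-! ### Part 1 -/

theorem part1 : ¬ ∃ (V : Type) (S : SimpleGraph V), Cardinal.mk V = Cardinal.aleph 2 ∧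
    ColLE S (Cardinal.aleph 1) ∧ ColLE Sᶜ (Cardinal.aleph 1) := by
  rintro ⟨V, S, hV, ⟨r, hr, hc⟩, ⟨r', hr', hc'⟩⟩
  obtain ⟨g, K, hK, hKm⟩ := two_wellorders hV r r' hr hr'
  haveI := hr
  have hsub : K ⊆ {h | r h g ∧ S.Adj g h} ∪ {h | r' h g ∧ Sᶜ.Adj g h} := by
    intro h hh
    obtain ⟨h1, h2⟩ := hKm h hh
    have hne : g ≠ h := by
      rintro rfl
      exact absurd h1 (irrefl_of r g)
    by_cases hadj : S.Adj g h
    · exact Or.inl ⟨h1, hadj⟩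
    · exact Or.inr ⟨h2, (SimpleGraph.compl_adj S g h).2 ⟨hne, hadj⟩⟩
  have hlt : #K < Cardinal.aleph 1 := by
    calc #K ≤ #({h | r h g ∧ S.Adj g h} ∪ {h | r' h g ∧ Sᶜ.Adj g h} : Set V) :=
        Cardinal.mk_le_mk_of_subset hsub
      _ ≤ #{h | r h g ∧ S.Adj g h} + #{h | r' h g ∧ Sᶜ.Adj g h} := Cardinal.mk_union_le _ _
      _ < Cardinal.aleph 1 :=
        Cardinal.add_lt_of_lt (aleph0_le_aleph 1) (hc g) (hc' g)
  exact absurd (lt_of_le_of_lt hK hlt) (lt_irrefl _)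

/-! ### Part 2 -/

theorem sat_continuum {W : Type} (G : SimpleGraph W) (hG : Sat11 G) :
    Cardinal.continuum ≤ #W := by
  classical
  have huniv : ¬ (Set.univ : Set W).Countable := by
    intro hcnt
    obtain ⟨v, hv, -⟩ := hG Set.univ ∅ hcnt Set.countable_empty (Set.disjoint_empty _)
    exact G.irrefl (hv v (Set.mem_univ v))
  haveI hinf : Infinite W := by
    by_contra h
    rw [not_infinite_iff_finite] at h
    exact huniv (Set.to_countable _)
  let p := Infinite.natEmbedding W
  have hsel : ∀ S : Set ℕ, ∃ v : W,
      (∀ a ∈ p '' S, G.Adj v a) ∧ (∀ b ∈ p '' Sᶜ, ¬ G.Adj v b) := by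
    intro S
    exact hG (p '' S) (p '' Sᶜ) ((Set.to_countable S).image p)
      ((Set.to_countable Sᶜ).image p)
      (Set.disjoint_image_of_injective p.injective disjoint_compl_right)
  choose v hv1 hv2 using hsel
  have hinj : Function.Injective v := by
    intro S T hST
    by_contra hne
    obtain ⟨n, hn⟩ : ∃ n, (n ∈ S ∧ n ∉ T) ∨ (n ∈ T ∧ n ∉ S) := by
      by_contra hall
      push_neg at hall
      exact hne (Set.ext fun n => ⟨(hall n).1, (hall n).2⟩)
    rcases hn with ⟨h1, h2⟩ | ⟨h1, h2⟩
    · exact hv2 T (p n) ⟨n, h2, rfl⟩ (hST ▸ hv1 S (p n) ⟨n, h1, rfl⟩)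
    · exact hv2 S (p n) ⟨n, h2, rfl⟩ (hST.symm ▸ hv1 T (p n) ⟨n, h1, rfl⟩)
  calc Cardinal.continuum = #(Set ℕ) := Cardinal.mk_set_nat.symm
    _ ≤ #W := Cardinal.mk_le_of_injective hinj

theorem aleph_one_lt_continuum_down.{v}
    (h : Cardinal.aleph.{v} 1 < Cardinal.continuum.{v}) :
    Cardinal.aleph.{0} 1 < Cardinal.continuum.{0} := by
  have h2 : Cardinal.lift.{v, 0} (Cardinal.aleph.{0} 1) <
      Cardinal.lift.{v, 0} Cardinal.continuum.{0} := by
    rw [Cardinal.lift_aleph, Cardinal.lift_continuum, Ordinal.lift_one]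
    exact h
  exact Cardinal.lift_lt.1 h2

theorem stmt18 :
    (¬ ∃ (V : Type) (S : SimpleGraph V), Cardinal.mk V = Cardinal.aleph 2 ∧
      ColLE S (Cardinal.aleph 1) ∧ ColLE Sᶜ (Cardinal.aleph 1)) ∧
    (Cardinal.aleph 1 < Cardinal.continuum →
      ¬ ∃ (V : Type) (G : SimpleGraph V), Sat11 G ∧
        ∀ (W : Type) (H : SimpleGraph W), Sat11 H → Nonempty (G ↪g H)) := by
  refine ⟨part1, ?_⟩
  rintro hc ⟨W, G, hsat, hprime⟩
  have hc0 : Cardinal.aleph 1 < Cardinal.continuum.{0} := aleph_one_lt_continuum_down hc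
  obtain ⟨f1⟩ := hprime HC_s18 HG sat_HG
  obtain ⟨f2⟩ := hprime HC_s18 HGᶜ sat_HGc
  have hcolG : ColLE G (Cardinal.aleph 1) := colLE_of_embedding f1 col_HG
  have hcolGc : ColLE Gᶜ (Cardinal.aleph 1) := by
    refine colLE_of_embedding (Embedding.compl f2) ?_
    rw [compl_compl]
    exact col_HG
  have h2c : Cardinal.aleph 2 ≤ #W := by
    refine le_trans ?_ (sat_continuum G hsat)
    have h21 : (2 : Ordinal) = Order.succ 1 := by
      rw [← Ordinal.add_one_eq_succ, one_add_one_eq_two]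
    rw [h21, aleph_succ]
    exact Order.succ_le_of_lt hc0
  obtain ⟨s, hs⟩ := Cardinal.le_mk_iff_exists_set.1 h2c
  refine part1 ⟨s, SimpleGraph.induce s G, hs, ?_, ?_⟩
  · exact colLE_of_embedding (SimpleGraph.Embedding.induce s) hcolG
  · exact colLE_of_embedding (Embedding.compl (SimpleGraph.Embedding.induce s)) hcolGc
end
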